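/- Let P be a real trigonometric polynomial of degree at most n, let I be a closed bounded interval of length r, let m ≥ 2, and suppose P has at least m zeros in I counting multiplicities. Then max_{θ∈I} |P'(θ)| ≤ (4er/(m−1))^{m−1} · max_{x∈I} |P^{(m)}(x)|. -/

import Mathlib

open Real Polynomial Set
open scoped ContDiff

private lemma natCast_lt_infty (n : ℕ) : (n : WithTop ℕ∞) < ∞ := by
  exact_mod_cast ENat.coe_lt_top n

private lemma contDiff_polyeval (p : ℝ[X]) : ContDiff ℝ ∞ fun x : ℝ => p.eval x := by
  induction p using Polynomial.induction_on' with
  | add p q hp hq => simpa using hp.add hq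
  | monomial n c =>
      simpa [Polynomial.eval_monomial] using (contDiff_const (c := c)).mul (contDiff_id.pow n)

private lemma iteratedDeriv_polyeval (p : ℝ[X]) (j : ℕ) :
    iteratedDeriv j (fun x : ℝ => p.eval x) = fun x => (Polynomial.derivative^[j] p).eval x := by
  induction j generalizing p with
  | zero => simp
  | succ j ih =>
      rw [iteratedDeriv_succ', Function.iterate_succ_apply]
      rw [show deriv (fun x : ℝ => p.eval x) = fun x => (Polynomial.derivative p).eval x from
        funext fun x => Polynomial.deriv p]
      exact ih (Polynomial.derivative p)

private lemma iteratedDeriv_f_sub_mul (f g : ℝ → ℝ) (hf : ContDiff ℝ ∞ f)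
    (hg : ContDiff ℝ ∞ g) (c : ℝ) (n : ℕ) :
    iteratedDeriv n (fun x => f x - c * g x)
      = fun x => iteratedDeriv n f x - c * iteratedDeriv n g x := by
  induction n with
  | zero => simp
  | succ n ih =>
      rw [iteratedDeriv_succ, ih, iteratedDeriv_succ, iteratedDeriv_succ]
      funext x
      have hfd : DifferentiableAt ℝ (iteratedDeriv n f) x :=
        (hf.differentiable_iteratedDeriv n (natCast_lt_infty n)).differentiableAt
      have hgd : DifferentiableAt ℝ (iteratedDeriv n g) x :=
        (hg.differentiable_iteratedDeriv n (natCast_lt_infty n)).differentiableAt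
      rw [deriv_fun_sub hfd (hgd.const_mul c), deriv_const_mul c hgd]
private lemma rolle_step (f : ℝ → ℝ) (hf : Continuous f) (s : Finset ℝ) :
    ∀ (hs : s.Nonempty) (μ : ℝ → ℕ),
      (∀ x ∈ s, 0 < μ x) →
      (∀ x ∈ s, ∀ j < μ x, iteratedDeriv j f x = 0) →
      ∃ (t : Finset ℝ) (ν : ℝ → ℕ),
        (↑t ⊆ Set.Icc (s.min' hs) (s.max' hs)) ∧ (∀ x ∈ t, 0 < ν x) ∧
        ((∑ x ∈ t, ν x) + 1 = ∑ x ∈ s, μ x) ∧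
        (∀ x ∈ t, ∀ j < ν x, iteratedDeriv j (deriv f) x = 0) := by
  induction s using Finset.induction_on_max with
  | empty => intro hs; exact absurd hs (by simp)
  | insert a s ha ih =>
    intro hs μ hμ hz
    have hamem : a ∈ insert a s := Finset.mem_insert_self a s
    rcases s.eq_empty_or_nonempty with rfl | hsne
    · -- singleton {a}
      have hμa : 0 < μ a := hμ a hamem
      have hmin : (insert a (∅ : Finset ℝ)).min' hs = a := by simp
      have hmax : (insert a (∅ : Finset ℝ)).max' hs = a := by simp
      by_cases h2 : 2 ≤ μ a
      · refine ⟨{a}, fun x => μ x - 1, ?_, ?_, ?_, ?_⟩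
        · intro x hx
          simp only [Finset.coe_singleton, Set.mem_singleton_iff] at hx
          rw [hmin, hmax, hx]; exact ⟨le_rfl, le_rfl⟩
        · intro x hx; simp only [Finset.mem_singleton] at hx; subst hx
          show 0 < μ x - 1; omega
        · simp only [Finset.sum_singleton, Finset.sum_insert (Finset.notMem_empty a),
            Finset.sum_empty]
          omega
        · intro x hx j hj
          simp only [Finset.mem_singleton] at hx; subst hx
          have hj' : j < μ x - 1 := hj
          rw [← iteratedDeriv_succ']
          exact hz x hamem (j + 1) (by omega)
      · refine ⟨∅, fun _ => 0, by simp, by simp, ?_, by simp⟩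
        simp only [Finset.sum_empty, Finset.sum_insert (Finset.notMem_empty a),
          Finset.sum_empty]
        omega
    · -- s nonempty, a > all of s
      set b := s.max' hsne with hb
      have hbs : b ∈ s := s.max'_mem hsne
      have hba : b < a := ha b hbs
      have hfa : f a = 0 := by simpa using hz a hamem 0 (hμ a hamem)
      have hfb : f b = 0 := by
        simpa using hz b (Finset.mem_insert_of_mem hbs) 0 (hμ b (Finset.mem_insert_of_mem hbs))
      obtain ⟨z, hzmem, hzd⟩ :=
        exists_deriv_eq_zero hba hf.continuousOn (by rw [hfa, hfb])
      obtain ⟨t, ν, htsub, htpos, htsum, htz⟩ := ih hsne μ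
        (fun x hx => hμ x (Finset.mem_insert_of_mem hx))
        (fun x hx => hz x (Finset.mem_insert_of_mem hx))
      -- basic orderings
      have hminle : s.min' hsne ≤ b := s.min'_le b hbs
      have htle : ∀ x ∈ t, x ≤ b := fun x hx => (htsub hx).2
      have hzt : z ∉ t := fun h => absurd (htle z h) (not_le.mpr hzmem.1)
      have hat : a ∉ insert z t := by
        simp only [Finset.mem_insert]
        rintro (rfl | h)
        · exact absurd hzmem.2 (lt_irrefl a)
        · exact absurd (htle a h) (not_le.mpr hba)
      have hmin : (insert a s).min' hs = s.min' hsne := by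
        rw [Finset.min'_insert]
        exact min_eq_right (hminle.trans hba.le)
      have hmax : (insert a s).max' hs = a := by
        rw [Finset.max'_insert (H := hsne)]
        exact max_eq_left hba.le
      set ν' : ℝ → ℕ := fun x => if x = a then μ a - 1 else if x = z then 1 else ν x with hν'
      have hν'z : ν' z = 1 := by
        simp [hν', ne_of_lt hzmem.2]
      have hν't : ∀ x ∈ t, ν' x = ν x := by
        intro x hx
        have h1 : x ≠ a := ne_of_lt ((htle x hx).trans_lt hba)
        have h2 : x ≠ z := ne_of_lt ((htle x hx).trans_lt hzmem.1)
        simp only [hν', if_neg h1, if_neg h2]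
      have hsum_zt : ∑ x ∈ insert z t, ν' x = 1 + ∑ x ∈ t, ν x := by
        rw [Finset.sum_insert hzt, hν'z]
        exact congrArg (1 + ·) (Finset.sum_congr rfl hν't)
      have hsubzt : ↑(insert z t) ⊆ Set.Icc ((insert a s).min' hs) ((insert a s).max' hs) := by
        rw [hmin, hmax]
        intro x hx
        simp only [Finset.coe_insert, Set.mem_insert_iff] at hx
        rcases hx with rfl | hx
        · exact ⟨hminle.trans hzmem.1.le, hzmem.2.le⟩
        · exact ⟨(htsub hx).1, (htsub hx).2.trans hba.le⟩
      have hzero_zt : ∀ x ∈ insert z t, ∀ j < ν' x, iteratedDeriv j (deriv f) x = 0 := by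
        intro x hx j hj
        rcases Finset.mem_insert.mp hx with rfl | hx
        · rw [hν'z] at hj
          interval_cases j
          simpa using hzd
        · rw [hν't x hx] at hj
          exact htz x hx j hj
      have hsum_s : ∑ x ∈ insert a s, μ x = μ a + ∑ x ∈ s, μ x := by
        rw [Finset.sum_insert (fun h => absurd (ha a h) (lt_irrefl a))]
      by_cases h2 : 2 ≤ μ a
      · refine ⟨insert a (insert z t), ν', ?_, ?_, ?_, ?_⟩
        · intro x hx
          simp only [Finset.coe_insert, Set.mem_insert_iff] at hx
          rcases hx with rfl | hx
          · rw [hmin, hmax]; exact ⟨hminle.trans hba.le, le_rfl⟩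
          · exact hsubzt (by simp only [Finset.coe_insert, Set.mem_insert_iff]; exact hx)
        · intro x hx
          rcases Finset.mem_insert.mp hx with rfl | hx
          · simp only [hν', if_pos rfl]; omega
          · rcases Finset.mem_insert.mp hx with rfl | hx
            · rw [hν'z]; norm_num
            · rw [hν't x hx]; exact htpos x hx
        · rw [Finset.sum_insert hat, hsum_zt, hsum_s]
          have : ν' a = μ a - 1 := by simp only [hν', if_pos rfl]
          omega
        · intro x hx j hj
          rcases Finset.mem_insert.mp hx with rfl | hx
          · simp only [hν', if_pos rfl] at hj
            rw [← iteratedDeriv_succ']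
            exact hz x hamem (j + 1) (by omega)
          · exact hzero_zt x hx j hj
      · have hμa1 : μ a = 1 := by have := hμ a hamem; omega
        refine ⟨insert z t, ν', hsubzt, ?_, ?_, hzero_zt⟩
        · intro x hx
          rcases Finset.mem_insert.mp hx with rfl | hx
          · rw [hν'z]; norm_num
          · rw [hν't x hx]; exact htpos x hx
        · rw [hsum_zt, hsum_s, hμa1]; omega
private lemma rolle_iter : ∀ (k : ℕ) (f : ℝ → ℝ), ContDiff ℝ ∞ f →
    ∀ (s : Finset ℝ) (μ : ℝ → ℕ) (u v : ℝ), (↑s ⊆ Set.Icc u v) →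
    (∀ x ∈ s, 0 < μ x) → (∑ x ∈ s, μ x = k + 1) →
    (∀ x ∈ s, ∀ j < μ x, iteratedDeriv j f x = 0) →
    ∃ ξ ∈ Set.Icc u v, iteratedDeriv k f ξ = 0 := by
  intro k
  induction k with
  | zero =>
    intro f hf s μ u v hsub hμ hsum hz
    have hs : s.Nonempty := by
      rcases s.eq_empty_or_nonempty with rfl | h
      · simp at hsum
      · exact h
    obtain ⟨x, hx⟩ := hs
    exact ⟨x, hsub hx, by simpa using hz x hx 0 (hμ x hx)⟩
  | succ k ih =>
    intro f hf s μ u v hsub hμ hsum hz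
    have hs : s.Nonempty := by
      rcases s.eq_empty_or_nonempty with rfl | h
      · simp at hsum
      · exact h
    obtain ⟨t, ν, htsub, htpos, htsum, htz⟩ := rolle_step f hf.continuous s hs μ hμ hz
    have htsub' : ↑t ⊆ Set.Icc u v := by
      refine htsub.trans (Set.Icc_subset_Icc ?_ ?_)
      · exact (hsub (s.min'_mem hs)).1
      · exact (hsub (s.max'_mem hs)).2
    have hsum' : ∑ x ∈ t, ν x = k + 1 := by omega
    have hf' : ContDiff ℝ ∞ (deriv f) := (contDiff_infty_iff_deriv.mp hf).2
    obtain ⟨ξ, hξ, h0⟩ := ih (deriv f) hf' t ν u v htsub' htpos hsum' htz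
    exact ⟨ξ, hξ, by rw [iteratedDeriv_succ']; exact h0⟩
private lemma key_bound (f : ℝ → ℝ) (hf : ContDiff ℝ ∞ f) (u v : ℝ)
    (k : ℕ) (hk : 0 < k) (s : Finset ℝ) (μ : ℝ → ℕ)
    (hsub : ↑s ⊆ Set.Icc u v) (hμ : ∀ x ∈ s, 0 < μ x) (hsum : ∑ x ∈ s, μ x = k)
    (hz : ∀ x ∈ s, ∀ j < μ x, iteratedDeriv j f x = 0)
    (θ : ℝ) (hθ : θ ∈ Set.Icc u v) :
    |f θ| ≤ (v - u) ^ k / (k.factorial : ℝ) *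
      sSup ((fun x => |iteratedDeriv k f x|) '' Set.Icc u v) := by
  classical
  have huv : u ≤ v := hθ.1.trans hθ.2
  set M := sSup ((fun x => |iteratedDeriv k f x|) '' Set.Icc u v) with hM
  have hbdd : BddAbove ((fun x => |iteratedDeriv k f x|) '' Set.Icc u v) :=
    (isCompact_Icc.image_of_continuousOn
      ((hf.continuous_iteratedDeriv k (natCast_lt_infty k).le).abs.continuousOn)).bddAbove
  have hMle : ∀ x ∈ Set.Icc u v, |iteratedDeriv k f x| ≤ M :=
    fun x hx => le_csSup hbdd ⟨x, hx, rfl⟩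
  have hM0 : 0 ≤ M := (abs_nonneg _).trans (hMle θ hθ)
  have hkfac : (0 : ℝ) < (k.factorial : ℝ) := by positivity
  set p : Polynomial ℝ := ∏ z ∈ s, (Polynomial.X - Polynomial.C z) ^ μ z with hp
  have hmono : p.Monic :=
    Polynomial.monic_prod_of_monic _ _ fun z _ => (Polynomial.monic_X_sub_C z).pow _
  have hdeg : p.natDegree = k := by
    rw [hp, Polynomial.natDegree_prod _ _
      (fun z _ => pow_ne_zero _ (Polynomial.X_sub_C_ne_zero z))]
    simp only [Polynomial.natDegree_pow, Polynomial.natDegree_X_sub_C, mul_one]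
    exact hsum
  have hWd : Polynomial.derivative^[k] p = Polynomial.C ((k.factorial : ℝ)) := by
    have h1 : (Polynomial.derivative^[k] p).natDegree ≤ 0 := by
      have := Polynomial.natDegree_iterate_derivative p k
      omega
    rw [Polynomial.eq_C_of_natDegree_le_zero h1, Polynomial.coeff_iterate_derivative]
    rw [zero_add, Nat.descFactorial_self]
    rw [show p.coeff k = 1 by rw [← hdeg]; exact hmono.coeff_natDegree]
    simp
  have hWzero : ∀ z ∈ s, ∀ j < μ z, iteratedDeriv j (fun x => p.eval x) z = 0 := by
    intro z hzs j hj
    rw [iteratedDeriv_polyeval]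
    have hdvd : (Polynomial.X - Polynomial.C z) ^ μ z ∣ p := Finset.dvd_prod_of_mem _ hzs
    obtain ⟨q, hq⟩ := Polynomial.pow_sub_dvd_iterate_derivative_of_pow_dvd j hdvd
    simp only [hq, Polynomial.eval_mul, Polynomial.eval_pow, Polynomial.eval_sub,
      Polynomial.eval_X, Polynomial.eval_C, sub_self]
    rw [zero_pow (by omega : μ z - j ≠ 0), zero_mul]
  by_cases hW : p.eval θ = 0
  · -- θ is itself a zero of f
    have hθs : ∃ z ∈ s, Polynomial.eval θ ((Polynomial.X - Polynomial.C z) ^ μ z) = 0 := by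
      rw [hp, Polynomial.eval_prod] at hW
      exact Finset.prod_eq_zero_iff.mp hW
    obtain ⟨z, hzs, hz0⟩ := hθs
    have hθz : θ = z := by
      simp only [Polynomial.eval_pow, Polynomial.eval_sub, Polynomial.eval_X,
        Polynomial.eval_C, pow_eq_zero_iff (by have := hμ z hzs; omega : μ z ≠ 0),
        sub_eq_zero] at hz0
      exact hz0
    have hfθ : f θ = 0 := by
      subst hθz
      simpa using hz θ hzs 0 (hμ θ hzs)
    rw [hfθ, abs_zero]
    exact mul_nonneg (div_nonneg (pow_nonneg (by linarith) k) hkfac.le) hM0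
  · set c : ℝ := f θ / p.eval θ with hc
    have hθs : θ ∉ s := by
      intro hmem
      apply hW
      rw [hp, Polynomial.eval_prod]
      refine Finset.prod_eq_zero hmem ?_
      simp only [Polynomial.eval_pow, Polynomial.eval_sub, Polynomial.eval_X,
        Polynomial.eval_C, sub_self]
      exact zero_pow (by have := hμ θ hmem; omega)
    set μ' : ℝ → ℕ := fun x => if x = θ then 1 else μ x with hμ'
    have hne : ∀ x ∈ s, x ≠ θ := by
      intro x hx h
      subst h
      exact hθs hx
    have hWc : ContDiff ℝ ∞ fun x : ℝ => p.eval x := contDiff_polyeval p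
    have hh : ContDiff ℝ ∞ (fun x => f x - c * p.eval x) := hf.sub (contDiff_const.mul hWc)
    have hsub' : ↑(insert θ s) ⊆ Set.Icc u v := by
      intro x hx
      simp only [Finset.coe_insert, Set.mem_insert_iff] at hx
      rcases hx with rfl | hx
      · exact hθ
      · exact hsub hx
    have hμ'pos : ∀ x ∈ insert θ s, 0 < μ' x := by
      intro x hx
      rcases Finset.mem_insert.mp hx with rfl | hx
      · simp [hμ']
      · simp only [hμ', if_neg (hne x hx)]
        exact hμ x hx
    have hsum' : ∑ x ∈ insert θ s, μ' x = k + 1 := by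
      rw [Finset.sum_insert hθs]
      have h1 : μ' θ = 1 := by simp [hμ']
      have h2 : ∑ x ∈ s, μ' x = ∑ x ∈ s, μ x := by
        refine Finset.sum_congr rfl fun x hx => ?_
        simp only [hμ', if_neg (hne x hx)]
      omega
    have hsubmul := iteratedDeriv_f_sub_mul f (fun x => p.eval x) hf hWc c
    have hz' : ∀ x ∈ insert θ s, ∀ j < μ' x, iteratedDeriv j (fun x => f x - c * p.eval x) x = 0 := by
      intro x hx j hj
      rcases Finset.mem_insert.mp hx with rfl | hx
      · have : μ' x = 1 := by simp [hμ']
        rw [this] at hj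
        interval_cases j
        simp only [iteratedDeriv_zero, hc]
        field_simp
        ring
      · have : μ' x = μ x := by simp only [hμ', if_neg (hne x hx)]
        rw [this] at hj
        rw [congrFun (hsubmul j) x, hz x hx j hj, hWzero x hx j hj, mul_zero, sub_zero]
    obtain ⟨ξ, hξ, hξ0⟩ := rolle_iter k (fun x => f x - c * p.eval x) hh (insert θ s) μ' u v
      hsub' hμ'pos hsum' hz'
    have hξ0' : iteratedDeriv k f ξ = c * (k.factorial : ℝ) := by
      rw [congrFun (hsubmul k) ξ] at hξ0
      rw [iteratedDeriv_polyeval, hWd] at hξ0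
      simp only [Polynomial.eval_C] at hξ0
      linarith
    have hcb : |c| * (k.factorial : ℝ) ≤ M := by
      have := hMle ξ hξ
      rwa [hξ0', abs_mul, abs_of_pos hkfac] at this
    have hcM : |c| ≤ M / (k.factorial : ℝ) := by
      rw [le_div_iff₀ hkfac]
      exact hcb
    have hfθ : f θ = c * p.eval θ := by
      rw [hc]
      field_simp
    have hWb : |p.eval θ| ≤ (v - u) ^ k := by
      rw [hp, Polynomial.eval_prod, Finset.abs_prod]
      calc ∏ z ∈ s, |Polynomial.eval θ ((Polynomial.X - Polynomial.C z) ^ μ z)|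
          = ∏ z ∈ s, |θ - z| ^ μ z := by
            simp [Polynomial.eval_pow, abs_pow]
        _ ≤ ∏ z ∈ s, (v - u) ^ μ z := by
            refine Finset.prod_le_prod (fun z _ => by positivity) (fun z hzs => ?_)
            refine pow_le_pow_left₀ (abs_nonneg _) ?_ _
            have hz1 := hsub hzs
            rw [abs_sub_le_iff]
            constructor <;> [linarith [hθ.1, hθ.2, hz1.1, hz1.2]; linarith [hθ.1, hθ.2, hz1.1, hz1.2]]
        _ = (v - u) ^ (∑ z ∈ s, μ z) := Finset.prod_pow_eq_pow_sum _ _ _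
        _ = (v - u) ^ k := by rw [hsum]
    calc |f θ| = |c| * |p.eval θ| := by rw [hfθ, abs_mul]
      _ ≤ (M / (k.factorial : ℝ)) * (v - u) ^ k := by
          exact mul_le_mul hcM hWb (abs_nonneg _) (by positivity)
      _ = (v - u) ^ k / (k.factorial : ℝ) * M := by ring

private lemma coeff_ineq (k : ℕ) (hk : 0 < k) (r : ℝ) (hr : 0 ≤ r) :
    r ^ k / (k.factorial : ℝ) ≤ (4 * Real.exp 1 * r / (k : ℝ)) ^ k := by
  have hkp : (0 : ℝ) < (k : ℝ) := by exact_mod_cast hk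
  have hfac : (0 : ℝ) < (k.factorial : ℝ) := by positivity
  have hkpow : (0 : ℝ) < (k : ℝ) ^ k := by positivity
  have h1 : (k : ℝ) ^ k / (k.factorial : ℝ) ≤ Real.exp k := by
    refine le_trans ?_ (Real.sum_le_exp_of_nonneg hkp.le (k + 1))
    exact Finset.single_le_sum (f := fun i => (k : ℝ) ^ i / (i.factorial : ℝ))
      (fun i _ => by positivity) (Finset.self_mem_range_succ k)
  have h2 : Real.exp (k : ℝ) = Real.exp 1 ^ k := by
    rw [← Real.exp_nat_mul, mul_one]
  have h3 : (k : ℝ) ^ k ≤ (4 * Real.exp 1) ^ k * (k.factorial : ℝ) := by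
    have he : Real.exp 1 ^ k ≤ (4 * Real.exp 1) ^ k := by
      refine pow_le_pow_left₀ (Real.exp_pos 1).le ?_ k
      nlinarith [Real.exp_pos 1]
    have h4 : (k : ℝ) ^ k ≤ Real.exp 1 ^ k * (k.factorial : ℝ) := by
      rw [div_le_iff₀ hfac] at h1
      rw [h2] at h1
      linarith
    calc (k : ℝ) ^ k ≤ Real.exp 1 ^ k * (k.factorial : ℝ) := h4
      _ ≤ (4 * Real.exp 1) ^ k * (k.factorial : ℝ) :=
          mul_le_mul_of_nonneg_right he hfac.le
  have hrw : (4 * Real.exp 1 * r / (k : ℝ)) ^ k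
      = ((4 * Real.exp 1) ^ k * r ^ k) / (k : ℝ) ^ k := by
    rw [div_pow, mul_pow]
  rw [hrw, div_le_div_iff₀ hfac hkpow]
  nlinarith [mul_le_mul_of_nonneg_left h3 (pow_nonneg hr k)]

/-- `P` has at least `m` zeros in `I`, counting multiplicities. -/
def HasZerosWithMult (P : ℝ → ℝ) (I : Set ℝ) (m : ℕ) : Prop :=
  ∃ (k : ℕ) (y : Fin k → ℝ) (mult : Fin k → ℕ),
    Function.Injective y ∧ (∀ i, y i ∈ I) ∧ (∀ i, 0 < mult i) ∧
    (∑ i, mult i) = m ∧ ∀ i : Fin k, ∀ j < mult i, iteratedDeriv j P (y i) = 0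

theorem stmt6 (n m : ℕ) (hm : 2 ≤ m) (a b : ℕ → ℝ) (P : ℝ → ℝ)
    (hP : ∀ x, P x = ∑ k ∈ Finset.range (n + 1),
      (a k * Real.cos (k * x) + b k * Real.sin (k * x)))
    (u v r : ℝ) (huv : u ≤ v) (hr : r = v - u)
    (hz : HasZerosWithMult P (Set.Icc u v) m) :
    ∀ θ ∈ Set.Icc u v,
      |deriv P θ| ≤ (4 * Real.exp 1 * r / (m - 1 : ℕ)) ^ (m - 1) *
        sSup ((fun x => |iteratedDeriv m P x|) '' Set.Icc u v) := by
  intro θ hθ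
  classical
  have hPeq : P = fun x => ∑ k ∈ Finset.range (n + 1),
      (a k * Real.cos (k * x) + b k * Real.sin (k * x)) := funext hP
  have hPc : ContDiff ℝ ∞ P := by
    rw [hPeq]
    apply ContDiff.sum
    intro i _
    apply ContDiff.add
    · exact contDiff_const.mul (Real.contDiff_cos.comp (contDiff_const.mul contDiff_id))
    · exact contDiff_const.mul (Real.contDiff_sin.comp (contDiff_const.mul contDiff_id))
  set K := m - 1 with hKdef
  have hK1 : m = K + 1 := by omega
  have hKpos : 0 < K := by omega
  obtain ⟨N, y, mult, hinj, hmemy, hposy, hsumz, hzero⟩ := hz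
  set s₀ : Finset ℝ := Finset.image y Finset.univ with hs₀def
  set μ₀ : ℝ → ℕ := fun x => if h : ∃ i, y i = x then mult h.choose else 0 with hμ₀def
  have hμ₀y : ∀ i, μ₀ (y i) = mult i := by
    intro i
    have hex : ∃ j, y j = y i := ⟨i, rfl⟩
    simp only [hμ₀def, dif_pos hex]
    exact congrArg mult (hinj hex.choose_spec)
  have hmem₀ : ∀ x ∈ s₀, ∃ i, y i = x := by
    intro x hx
    obtain ⟨i, -, rfl⟩ := Finset.mem_image.mp hx
    exact ⟨i, rfl⟩
  have hpos₀ : ∀ x ∈ s₀, 0 < μ₀ x := by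
    intro x hx; obtain ⟨i, rfl⟩ := hmem₀ x hx; rw [hμ₀y]; exact hposy i
  have hsum₀ : ∑ x ∈ s₀, μ₀ x = m := by
    rw [hs₀def, Finset.sum_image (fun i _ j _ h => hinj h)]
    rw [← hsumz]
    exact Finset.sum_congr rfl fun i _ => hμ₀y i
  have hsub₀ : ↑s₀ ⊆ Set.Icc u v := by
    intro x hx
    obtain ⟨i, rfl⟩ := hmem₀ x (Finset.mem_coe.mp hx)
    exact hmemy i
  have hz₀ : ∀ x ∈ s₀, ∀ j < μ₀ x, iteratedDeriv j P x = 0 := by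
    intro x hx j hj
    obtain ⟨i, rfl⟩ := hmem₀ x hx
    rw [hμ₀y] at hj
    exact hzero i j hj
  have hs₀ne : s₀.Nonempty := by
    rcases s₀.eq_empty_or_nonempty with h | h
    · rw [h] at hsum₀; simp at hsum₀; omega
    · exact h
  obtain ⟨t, ν, htsub, htpos, htsum, htz⟩ := rolle_step P hPc.continuous s₀ hs₀ne μ₀ hpos₀ hz₀
  have htsub' : ↑t ⊆ Set.Icc u v :=
    htsub.trans (Set.Icc_subset_Icc (hsub₀ (s₀.min'_mem hs₀ne)).1 (hsub₀ (s₀.max'_mem hs₀ne)).2)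
  have htsum' : ∑ x ∈ t, ν x = K := by omega
  have hg : ContDiff ℝ ∞ (deriv P) := (contDiff_infty_iff_deriv.mp hPc).2
  have hkey := key_bound (deriv P) hg u v K hKpos t ν htsub' htpos htsum' htz θ hθ
  have hset : (fun x => |iteratedDeriv K (deriv P) x|) = fun x => |iteratedDeriv m P x| := by
    funext x
    rw [hK1, iteratedDeriv_succ']
  rw [hset] at hkey
  set M := sSup ((fun x => |iteratedDeriv m P x|) '' Set.Icc u v) with hMdef
  have hM0 : 0 ≤ M := by
    have hbdd : BddAbove ((fun x => |iteratedDeriv m P x|) '' Set.Icc u v) :=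
      (isCompact_Icc.image_of_continuousOn
        ((hPc.continuous_iteratedDeriv m (natCast_lt_infty m).le).abs.continuousOn)).bddAbove
    exact (abs_nonneg _).trans (le_csSup hbdd ⟨θ, hθ, rfl⟩)
  have hr0 : 0 ≤ r := by rw [hr]; linarith
  refine hkey.trans ?_
  rw [← hr]
  exact mul_le_mul_of_nonneg_right (coeff_ineq K hKpos r hr0) hM0
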